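/- Let p > 3 be prime. For the magic state |f⟩ = |f_{-12^{-1}, -8^{-1}, c}⟩ and the operator S = Σ_{B∈Z_p} |ψ_B^{-B(B+2^{-1})}⟩⟨ψ_B^{-B(B+2^{-1})}|, one has ⟨f|S|f⟩ = p · |⟨+|f⟩|², where |+⟩ = p^{-1/2} Σ_k |k⟩. -/

import Mathlib

open Complex Matrix BigOperators Finset
open scoped Kronecker

noncomputable section

/-- Additive character `a ↦ exp(2πi a/p)` on `ZMod p`. -/
def chi (p : ℕ) (a : ZMod p) : ℂ := Complex.exp (2 * Real.pi * Complex.I * (a.val : ℂ) / p)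

/-- The shift operator `X : |j⟩ ↦ |j+1⟩`. -/
def Xop (p : ℕ) : Matrix (ZMod p) (ZMod p) ℂ := fun j k => if j = k + 1 then 1 else 0

/-- The clock operator `Z : |j⟩ ↦ ω^j |j⟩`. -/
def Zop (p : ℕ) : Matrix (ZMod p) (ZMod p) ℂ := Matrix.diagonal (fun j => chi p j)

/-- Weyl-Heisenberg displacement operator `D_(x|z) = ω^{2⁻¹ x z} X^x Z^z`. -/
def Dop (p : ℕ) [NeZero p] (x z : ZMod p) : Matrix (ZMod p) (ZMod p) ℂ :=
  chi p ((2 : ZMod p)⁻¹ * x * z) • (Xop p ^ x.val * Zop p ^ z.val)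

/-- The stabilizer MUB vector `|ψ_B^V⟩ = p^{-1/2} Σ_k ω^{2⁻¹ B k² - V k} |k⟩`. -/
def psi (p : ℕ) (B V : ZMod p) : ZMod p → ℂ :=
  fun k => ((Real.sqrt p : ℂ))⁻¹ * chi p ((2 : ZMod p)⁻¹ * B * k ^ 2 - V * k)

/-- The magic state `|f_{a,b,c}⟩ = p^{-1/2} Σ_k ω^{a k³ + b k² + c k} |k⟩`. -/
def magic (p : ℕ) (a b c : ZMod p) : ZMod p → ℂ :=
  fun k => ((Real.sqrt p : ℂ))⁻¹ * chi p (a * k ^ 3 + b * k ^ 2 + c * k)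

/-- Rank-one projector `|v⟩⟨v|`. -/
def proj (p : ℕ) (v : ZMod p → ℂ) : Matrix (ZMod p) (ZMod p) ℂ :=
  fun i j => v i * (starRingEnd ℂ) (v j)

/-- The single-qudit operator `S = Σ_B |ψ_B^{-B(B+2⁻¹)}⟩⟨ψ_B^{-B(B+2⁻¹)}|`. -/
def Sop (p : ℕ) [NeZero p] : Matrix (ZMod p) (ZMod p) ℂ :=
  ∑ B : ZMod p, proj p (psi p B (-B * (B + (2 : ZMod p)⁻¹)))

section Aux

variable {p : ℕ} [NeZero p]

lemma chi_eq' (a : ZMod p) : chi p a = ZMod.stdAddChar a := by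
  rw [ZMod.stdAddChar_apply, ZMod.toCircle_apply]
  rfl

lemma chi_add' (a b : ZMod p) : chi p (a + b) = chi p a * chi p b := by
  simp only [chi_eq', AddChar.map_add_eq_mul]

lemma chi_zero' : chi p 0 = 1 := by
  simp only [chi_eq', AddChar.map_zero_eq_one]

lemma chi_ne_zero' (a : ZMod p) : chi p a ≠ 0 := Complex.exp_ne_zero _

lemma chi_conj' (a : ZMod p) : (starRingEnd ℂ) (chi p a) = chi p (-a) := by
  have h1 : chi p (-a) * chi p a = 1 := by rw [← chi_add', neg_add_cancel, chi_zero']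
  have h2 : (starRingEnd ℂ) (chi p a) * chi p a = 1 := by
    rw [chi, ← Complex.exp_conj, ← Complex.exp_add, ← Complex.exp_zero]
    congr 1
    have : (starRingEnd ℂ) (2 * Real.pi * Complex.I * ((a.val : ℕ) : ℂ) / p) =
        -(2 * Real.pi * Complex.I * ((a.val : ℕ) : ℂ) / p) := by
      simp only [map_div₀, _root_.map_mul, Complex.conj_I, Complex.conj_natCast,
        Complex.conj_ofReal, map_ofNat]
      ring
    rw [this]; ring
  exact mul_right_cancel₀ (chi_ne_zero' a) (h2.trans h1.symm)

end Aux

section Key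

variable {p : ℕ} [Fact p.Prime]

lemma nz_of_lt' (n : ℕ) (hn : 0 < n) (h : n < p) : ((n : ZMod p)) ≠ 0 := by
  rw [Ne, ZMod.natCast_eq_zero_iff]
  intro hd
  exact absurd (Nat.le_of_dvd hn hd) (by omega)

lemma key' (hp3 : 3 < p) (B c m : ZMod p) :
    -((2:ZMod p)⁻¹ * B * (m + -(2*B))^2 - (-B * (B + (2:ZMod p)⁻¹)) * (m + -(2*B)))
      + (-(12 : ZMod p)⁻¹ * (m + -(2*B))^3 + -(8 : ZMod p)⁻¹ * (m + -(2*B))^2 + c * (m + -(2*B)))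
    = (-((2:ZMod p)⁻¹ * B * (-(2*B))^2 - (-B * (B + (2:ZMod p)⁻¹)) * (-(2*B)))
      + (-(12 : ZMod p)⁻¹ * (-(2*B))^3 + -(8 : ZMod p)⁻¹ * (-(2*B))^2 + c * (-(2*B))))
      + (-(12 : ZMod p)⁻¹ * m^3 + -(8 : ZMod p)⁻¹ * m^2 + c * m) := by
  have h2 : (2 : ZMod p) ≠ 0 := by
    have := nz_of_lt' (p := p) 2 (by norm_num) (by omega); exact_mod_cast this
  have h3 : (3 : ZMod p) ≠ 0 := by
    have := nz_of_lt' (p := p) 3 (by norm_num) (by omega); exact_mod_cast this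
  have h8 : (8 : ZMod p) ≠ 0 := by
    have : (8 : ZMod p) = 2^3 := by norm_num
    rw [this]; exact pow_ne_zero _ h2
  have h12 : (12 : ZMod p) ≠ 0 := by
    have : (12 : ZMod p) = 2^2 * 3 := by norm_num
    rw [this]; exact mul_ne_zero (pow_ne_zero _ h2) h3
  field_simp
  ring

end Key

theorem stmt10 (p : ℕ) [Fact p.Prime] (hp3 : 3 < p) (c : ZMod p) :
    star (magic p (-(12 : ZMod p)⁻¹) (-(8 : ZMod p)⁻¹) c) ⬝ᵥ
        (Sop p *ᵥ magic p (-(12 : ZMod p)⁻¹) (-(8 : ZMod p)⁻¹) c)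
      = (p : ℂ) * (‖(∑ k : ZMod p,
          (starRingEnd ℂ) (((Real.sqrt p : ℂ))⁻¹) *
            magic p (-(12 : ZMod p)⁻¹) (-(8 : ZMod p)⁻¹) c k)‖ : ℝ) ^ 2 := by
  have hploc : p.Prime := Fact.out
  haveI : NeZero p := ⟨hploc.ne_zero⟩
  set a : ZMod p := -(12 : ZMod p)⁻¹ with ha
  set b : ZMod p := -(8 : ZMod p)⁻¹ with hb
  set s : ℂ := ((Real.sqrt p : ℂ))⁻¹ with hs
  set f : ZMod p → ℂ := magic p a b c with hf
  set z : ℂ := ∑ k : ZMod p, (starRingEnd ℂ) s * f k with hz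
  -- the per-B inner product
  have hU : ∀ B : ZMod p,
      (∑ j : ZMod p, (starRingEnd ℂ) (psi p B (-B * (B + (2 : ZMod p)⁻¹)) j) * f j)
        = chi p (-((2:ZMod p)⁻¹ * B * (-(2*B))^2 - (-B * (B + (2:ZMod p)⁻¹)) * (-(2*B)))
            + (a * (-(2*B))^3 + b * (-(2*B))^2 + c * (-(2*B)))) * z := by
    intro B
    set t : ZMod p := -(2*B) with ht
    set θ : ZMod p := -((2:ZMod p)⁻¹ * B * t^2 - (-B * (B + (2:ZMod p)⁻¹)) * t)
        + (a * t^3 + b * t^2 + c * t) with hθ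
    calc (∑ j : ZMod p, (starRingEnd ℂ) (psi p B (-B * (B + (2 : ZMod p)⁻¹)) j) * f j)
        = ∑ m : ZMod p, (starRingEnd ℂ) (psi p B (-B * (B + (2 : ZMod p)⁻¹)) (m + t))
            * f (m + t) := by
          exact (Fintype.sum_equiv (Equiv.addRight t) _ _ (fun m => rfl)).symm
      _ = ∑ m : ZMod p, chi p θ * ((starRingEnd ℂ) s * f m) := by
          refine Finset.sum_congr rfl (fun m _ => ?_)
          simp only [psi, magic, hf, _root_.map_mul, chi_conj']
          rw [← hs, mul_mul_mul_comm, ← chi_add']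
          rw [show -((2:ZMod p)⁻¹ * B * (m+t)^2 - (-B * (B + (2:ZMod p)⁻¹)) * (m+t))
              + (a * (m+t)^3 + b * (m+t)^2 + c * (m+t)) = θ + (a*m^3 + b*m^2 + c*m) from by
            rw [hθ, ha, hb, ht]; exact key' hp3 B c m]
          rw [chi_add']
          ring
      _ = chi p θ * z := by rw [hz, ← Finset.mul_sum]
  -- expand the quadratic form
  have per : ∀ v : ZMod p → ℂ, star f ⬝ᵥ ((proj p v) *ᵥ f)
      = (starRingEnd ℂ) (∑ j : ZMod p, (starRingEnd ℂ) (v j) * f j) *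
        (∑ j : ZMod p, (starRingEnd ℂ) (v j) * f j) := by
    intro v
    have e1 : star f ⬝ᵥ ((proj p v) *ᵥ f)
        = ∑ i : ZMod p, ∑ j : ZMod p,
            ((starRingEnd ℂ) (f i) * v i) * ((starRingEnd ℂ) (v j) * f j) := by
      simp only [dotProduct, Matrix.mulVec, proj, Pi.star_apply, Complex.star_def,
        Finset.mul_sum]
      refine Finset.sum_congr rfl (fun i _ => Finset.sum_congr rfl (fun j _ => by ring))
    rw [e1, ← Finset.sum_mul_sum]
    congr 1
    rw [map_sum]
    refine Finset.sum_congr rfl (fun j _ => ?_)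
    rw [_root_.map_mul, Complex.conj_conj, mul_comm]
  have expand : star f ⬝ᵥ (Sop p *ᵥ f)
      = ∑ B : ZMod p, star f ⬝ᵥ ((proj p (psi p B (-B * (B + (2 : ZMod p)⁻¹)))) *ᵥ f) := by
    have h1 : (Sop p) *ᵥ f
        = ∑ B : ZMod p, (proj p (psi p B (-B * (B + (2 : ZMod p)⁻¹)))) *ᵥ f := by
      ext i
      simp only [Sop, Matrix.mulVec, dotProduct, Matrix.sum_apply, Finset.sum_apply,
        Finset.sum_mul]
      exact Finset.sum_comm
    rw [h1]
    simp only [dotProduct, Finset.sum_apply, Finset.mul_sum]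
    exact Finset.sum_comm
  rw [expand]
  have hterm : ∀ B : ZMod p,
      star f ⬝ᵥ ((proj p (psi p B (-B * (B + (2 : ZMod p)⁻¹)))) *ᵥ f)
        = (starRingEnd ℂ) z * z := by
    intro B
    rw [per, hU B, _root_.map_mul, chi_conj', mul_mul_mul_comm, ← chi_add', neg_add_cancel,
      chi_zero', one_mul]
  simp only [hterm]
  rw [Finset.sum_const, Finset.card_univ, ZMod.card, nsmul_eq_mul]
  rw [← Complex.ofReal_pow, Complex.sq_norm, mul_comm ((starRingEnd ℂ) z) z,
    Complex.mul_conj]
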